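/- Let Λ be a restricted sheaf of rings of differential operators with p-structures [p] and [p]'. Then the difference φ(D) = D^{[p]} − D^{[p]'} defines a p-linear map φ : H → Z(Λ₁) from H = Λ₁/Λ₀ to the centralizer of Λ₁ in Λ₁: φ is additive, φ(fD) = f^p φ(D), φ vanishes on Λ₀, and ad(φ(D))(E) = 0 for all E ∈ Λ₁. Conversely, given a p-structure [p] and any p-linear map φ : H → Z(Λ₁), the map D ↦ D^{[p]} + φ(sb(D)) is again a p-structure. -/

import Mathlib

open Finset in
/-- A `p`-structure on a sheaf of rings of differential operators, rendered algebraically: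
`Λ` an associative ring, `O = Λ₀` a commutative subring, `Λ₁` an additive subgroup with
`O ⊆ Λ₁`, `s` the universal Lie polynomials. The four axioms are:
`ad(D^{[p]}) = ad(D)^p` on `Λ₁`, Jacobson-compatible additivity,
`(fD)^{[p]} = f^p D^{[p]} + δ_{fD}^{p-1}(f) D`, and `f^{[p]} = f^p`. -/
def IsPStructure (p : ℕ) {Λ : Type*} [Ring Λ] (O : Subring Λ) (Λ₁ : AddSubgroup Λ)
    (s : ℕ → Λ → Λ → Λ) (pm : Λ → Λ) : Prop :=
  (∀ D ∈ Λ₁, pm D ∈ Λ₁) ∧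
  (∀ D ∈ Λ₁, ∀ E ∈ Λ₁, pm D * E - E * pm D = (fun z => D * z - z * D)^[p] E) ∧
  (∀ D₁ ∈ Λ₁, ∀ D₂ ∈ Λ₁,
    pm (D₁ + D₂) = pm D₁ + pm D₂ + ∑ i ∈ Ico 1 p, s i D₁ D₂) ∧
  (∀ f ∈ O, ∀ D ∈ Λ₁, pm (f * D)
    = f ^ p * pm D + (fun z => (f * D) * z - z * (f * D))^[p-1] f * D) ∧
  (∀ f ∈ O, pm f = f ^ p)

open Finset in
/-- Classification of `p`-structures: the difference of two `p`-structures is a `p`-linear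
map `φ : H = Λ₁/Λ₀ → Z(Λ₁)` (additive, `φ(fD) = f^p φ(D)`, vanishing on `Λ₀`, with values
commuting with all of `Λ₁`); conversely, adding such a `φ ∘ sb` to a `p`-structure yields
again a `p`-structure. -/
theorem stmt14 (p : ℕ) [Fact p.Prime] (Λ : Type*) [Ring Λ] [CharP Λ p]
    (O : Subring Λ) (hOcomm : ∀ f ∈ O, ∀ g ∈ O, f * g = g * f)
    (Λ₁ : AddSubgroup Λ) (hOΛ₁ : (O : Set Λ) ⊆ Λ₁)
    (hmul : ∀ f ∈ O, ∀ D ∈ Λ₁, f * D ∈ Λ₁)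
    (hcomm : ∀ D ∈ Λ₁, ∀ f ∈ O, D * f - f * D ∈ O)
    (s : ℕ → Λ → Λ → Λ)
    (hJacobson : ∀ x y : Λ, (x + y) ^ p = x ^ p + y ^ p + ∑ i ∈ Ico 1 p, s i x y) :
    -- the difference of two p-structures is p-linear into the centralizer,
    -- vanishing on Λ₀ (hence factoring through H = Λ₁/Λ₀)
    (∀ pm pm' : Λ → Λ, IsPStructure p O Λ₁ s pm → IsPStructure p O Λ₁ s pm' →
      (∀ D₁ ∈ Λ₁, ∀ D₂ ∈ Λ₁,
        (pm (D₁ + D₂) - pm' (D₁ + D₂)) = (pm D₁ - pm' D₁) + (pm D₂ - pm' D₂)) ∧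
      (∀ f ∈ O, ∀ D ∈ Λ₁, pm (f * D) - pm' (f * D) = f ^ p * (pm D - pm' D)) ∧
      (∀ f ∈ O, pm f - pm' f = 0) ∧
      (∀ D ∈ Λ₁, ∀ E ∈ Λ₁, (pm D - pm' D) * E = E * (pm D - pm' D))) ∧
    -- conversely, adding a p-linear map into the centralizer which vanishes on Λ₀
    -- gives again a p-structure
    (∀ (pm φ : Λ → Λ), IsPStructure p O Λ₁ s pm →
      (∀ D ∈ Λ₁, φ D ∈ Λ₁) →
      (∀ D₁ ∈ Λ₁, ∀ D₂ ∈ Λ₁, φ (D₁ + D₂) = φ D₁ + φ D₂) →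
      (∀ f ∈ O, ∀ D ∈ Λ₁, φ (f * D) = f ^ p * φ D) →
      (∀ f ∈ O, φ f = 0) →
      (∀ D ∈ Λ₁, ∀ E ∈ Λ₁, φ D * E = E * φ D) →
      IsPStructure p O Λ₁ s (fun D => pm D + φ D)) := by
  constructor
  · rintro pm pm' ⟨h1,h2,h3,h4,h5⟩ ⟨h1',h2',h3',h4',h5'⟩
    refine ⟨?_, ?_, ?_, ?_⟩
    · intro D₁ hD₁ D₂ hD₂
      rw [h3 D₁ hD₁ D₂ hD₂, h3' D₁ hD₁ D₂ hD₂]; abel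
    · intro f hf D hD
      rw [h4 f hf D hD, h4' f hf D hD, mul_sub]; abel
    · intro f hf
      rw [h5 f hf, h5' f hf, sub_self]
    · intro D hD E hE
      have h := (h2 D hD E hE).trans (h2' D hD E hE).symm
      have h0 : (pm D - pm' D) * E - E * (pm D - pm' D)
          = (pm D * E - E * pm D) - (pm' D * E - E * pm' D) := by noncomm_ring
      rw [← sub_eq_zero, h0, h, sub_self]
  · rintro pm φ ⟨h1,h2,h3,h4,h5⟩ hφ1 hφ2 hφ3 hφ4 hφ5
    refine ⟨?_, ?_, ?_, ?_, ?_⟩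
    · intro D hD; exact Λ₁.add_mem (h1 D hD) (hφ1 D hD)
    · intro D hD E hE
      have hc := hφ5 D hD E hE
      have h := h2 D hD E hE
      show (pm D + φ D) * E - E * (pm D + φ D) = _
      have : (pm D + φ D) * E - E * (pm D + φ D)
          = (pm D * E - E * pm D) + (φ D * E - E * φ D) := by noncomm_ring
      rw [this, hc, sub_self, add_zero, h]
    · intro D₁ hD₁ D₂ hD₂
      show pm (D₁ + D₂) + φ (D₁ + D₂) = _
      rw [h3 D₁ hD₁ D₂ hD₂, hφ2 D₁ hD₁ D₂ hD₂]; beta_reduce; abel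
    · intro f hf D hD
      show pm (f * D) + φ (f * D) = _
      rw [h4 f hf D hD, hφ3 f hf D hD, mul_add]; abel
    · intro f hf
      show pm f + φ f = _
      rw [h5 f hf, hφ4 f hf, add_zero]
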